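/- For every c ∈ (0, 1/2] there exists a constant K > 0 such that for all integers n ≥ 2 and p with 0 < p < n, and every real α with c ≤ α ≤ 1 − c for which αn and αp are integers (hence α(n−p) is an integer), one has C(p, αp) · C(n − p, α(n−p)) / C(n, αn) ≥ K / √n. Equivalently, for S' drawn uniformly from the αn-element subsets of an n-element set and Φ a p-element subset, Pr[|S' ∩ Φ| = αp] ≥ K / √n. -/

import Mathlib

open Real

private lemma stirling_lb (n : ℕ) : Real.sqrt π ≤ Stirling.stirlingSeq (n + 1) := by
  refine le_of_tendsto Stirling.tendsto_stirlingSeq_sqrt_pi ?_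
  filter_upwards [Filter.eventually_ge_atTop (n + 1)] with m hm
  have h1 : m - 1 + 1 = m := by omega
  have := Stirling.stirlingSeq'_antitone (show n ≤ m - 1 by omega)
  simpa [Function.comp, h1] using this

private lemma stirling_ub (n : ℕ) : Stirling.stirlingSeq (n + 1) ≤ 2 := by
  have h1 : Stirling.stirlingSeq (n + 1) ≤ Stirling.stirlingSeq 1 := by
    have := Stirling.stirlingSeq'_antitone (Nat.zero_le n)
    simpa [Function.comp] using this
  rw [Stirling.stirlingSeq_one] at h1
  refine h1.trans ?_
  rw [div_le_iff₀ (by positivity)]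
  have h3 : (1.41 : ℝ) ≤ Real.sqrt 2 := by
    rw [Real.le_sqrt (by norm_num) (by norm_num)]; norm_num
  nlinarith [Real.exp_one_lt_d9]

private lemma fact_eq (n : ℕ) (hn : 1 ≤ n) :
    ((n.factorial : ℕ):ℝ) = Stirling.stirlingSeq n * (Real.sqrt (2*n) * ((n:ℝ)^n / Real.exp n)) := by
  have hn0 : (0:ℝ) < n := by exact_mod_cast hn
  have hd : Real.sqrt (2*n) * ((n:ℝ)/Real.exp 1)^n ≠ 0 := by positivity
  have : ((n:ℝ)/Real.exp 1)^n = (n:ℝ)^n / Real.exp n := by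
    rw [div_pow, Real.exp_one_pow]
  rw [← this, Stirling.stirlingSeq, div_mul_cancel₀ _ hd]

private lemma factorial_sq_lb (n : ℕ) (hn : 1 ≤ n) :
    π * (2*n) * ((n:ℝ)^n / Real.exp n)^2 ≤ ((n.factorial : ℕ):ℝ)^2 := by
  obtain ⟨k, rfl⟩ : ∃ k, n = k + 1 := ⟨n - 1, by omega⟩
  rw [fact_eq _ hn, mul_pow, mul_pow, Real.sq_sqrt (by positivity)]
  have h2 : π ≤ Stirling.stirlingSeq (k+1) ^ 2 := by
    nlinarith [stirling_lb k, Real.sqrt_nonneg π, Real.sq_sqrt Real.pi_pos.le]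
  have h4 : (0:ℝ) ≤ (2*((k:ℝ)+1)) * (((k+1:ℕ):ℝ)^(k+1) / Real.exp ((k+1:ℕ):ℝ))^2 := by positivity
  push_cast at *
  nlinarith [h4, h2]

private lemma factorial_sq_ub (n : ℕ) (hn : 1 ≤ n) :
    ((n.factorial : ℕ):ℝ)^2 ≤ 4 * (2*n) * ((n:ℝ)^n / Real.exp n)^2 := by
  obtain ⟨k, rfl⟩ : ∃ k, n = k + 1 := ⟨n - 1, by omega⟩
  rw [fact_eq _ hn, mul_pow, mul_pow, Real.sq_sqrt (by positivity)]
  have h2 : Stirling.stirlingSeq (k+1) ^ 2 ≤ 4 := by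
    nlinarith [stirling_ub k, stirling_lb k, Real.sqrt_nonneg π]
  have h4 : (0:ℝ) ≤ (2*((k:ℝ)+1)) * (((k+1:ℕ):ℝ)^(k+1) / Real.exp ((k+1:ℕ):ℝ))^2 := by positivity
  push_cast at *
  nlinarith [h4, h2]

private lemma choose_sq_lb (k l : ℕ) (hk : 1 ≤ k) (hl : 1 ≤ l) :
    π/16 * (((k:ℝ)+l)/(2*k*l)) *
      (((k:ℝ)+l)^(k+l) / ((k:ℝ)^k * (l:ℝ)^l))^2 ≤ (((k+l).choose k : ℕ):ℝ)^2 := by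
  have hk0 : (0:ℝ) < k := by exact_mod_cast hk
  have hl0 : (0:ℝ) < l := by exact_mod_cast hl
  have hC : (((k+l).choose k : ℕ):ℝ)
      = ((k+l).factorial : ℝ) / ((k.factorial : ℝ) * (l.factorial : ℝ)) :=
    Nat.cast_add_choose ℝ
  have hFk := factorial_sq_ub k hk
  have hFl := factorial_sq_ub l hl
  have hF := factorial_sq_lb (k+l) (by omega)
  have hfk0 : (0:ℝ) < (k.factorial : ℝ) := by exact_mod_cast k.factorial_pos
  have hfl0 : (0:ℝ) < (l.factorial : ℝ) := by exact_mod_cast l.factorial_pos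
  rw [hC, div_pow _ ((k.factorial:ℝ) * (l.factorial:ℝ)), le_div_iff₀ (by positivity)]
  have hL0 : (0:ℝ) ≤ π/16 * (((k:ℝ)+l)/(2*k*l)) *
      (((k:ℝ)+l)^(k+l) / ((k:ℝ)^k * (l:ℝ)^l))^2 := by positivity
  calc π/16 * (((k:ℝ)+l)/(2*k*l)) * (((k:ℝ)+l)^(k+l) / ((k:ℝ)^k * (l:ℝ)^l))^2
        * ((k.factorial : ℝ) * (l.factorial : ℝ))^2
      ≤ π/16 * (((k:ℝ)+l)/(2*k*l)) * (((k:ℝ)+l)^(k+l) / ((k:ℝ)^k * (l:ℝ)^l))^2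
        * ((4 * (2*k) * ((k:ℝ)^k / Real.exp k)^2) * (4 * (2*l) * ((l:ℝ)^l / Real.exp l)^2)) := by
        refine mul_le_mul_of_nonneg_left ?_ hL0
        rw [mul_pow]
        exact mul_le_mul hFk hFl (by positivity) (by positivity)
    _ = π * (2*((k:ℝ)+l)) * ((((k:ℝ)+l))^(k+l) / Real.exp ((k:ℝ)+l))^2 := by
        rw [Real.exp_add]
        have e1 : Real.exp (k:ℝ) ≠ 0 := Real.exp_ne_zero _
        have e2 : Real.exp (l:ℝ) ≠ 0 := Real.exp_ne_zero _
        field_simp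
        ring
    _ ≤ ((k+l).factorial : ℝ)^2 := by
        have := hF
        push_cast at this ⊢
        convert this using 3 <;> push_cast <;> ring

private lemma choose_sq_ub (k l : ℕ) (hk : 1 ≤ k) (hl : 1 ≤ l) :
    (((k+l).choose k : ℕ):ℝ)^2 ≤ 4/π^2 * (((k:ℝ)+l)/(2*k*l)) *
      (((k:ℝ)+l)^(k+l) / ((k:ℝ)^k * (l:ℝ)^l))^2 := by
  have hk0 : (0:ℝ) < k := by exact_mod_cast hk
  have hl0 : (0:ℝ) < l := by exact_mod_cast hl
  have hC : (((k+l).choose k : ℕ):ℝ)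
      = ((k+l).factorial : ℝ) / ((k.factorial : ℝ) * (l.factorial : ℝ)) :=
    Nat.cast_add_choose ℝ
  have hFk := factorial_sq_lb k hk
  have hFl := factorial_sq_lb l hl
  have hF := factorial_sq_ub (k+l) (by omega)
  rw [hC, div_pow _ ((k.factorial:ℝ) * (l.factorial:ℝ))]
  calc ((k+l).factorial : ℝ)^2 / ((k.factorial:ℝ) * (l.factorial:ℝ))^2
      ≤ (4 * (2*((k:ℝ)+(l:ℝ))) * (((k:ℝ)+l)^(k+l) / Real.exp ((k:ℝ)+l))^2)
        / ((π * (2*k) * ((k:ℝ)^k / Real.exp k)^2) * (π * (2*l) * ((l:ℝ)^l / Real.exp l)^2)) := by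
        refine div_le_div₀ (by positivity) ?_ (by positivity) ?_
        · have := hF
          push_cast at this
          convert this using 3 <;> push_cast <;> ring
        · rw [mul_pow]
          exact mul_le_mul hFk hFl (by positivity) (by positivity)
    _ = 4/π^2 * (((k:ℝ)+l)/(2*k*l)) * (((k:ℝ)+l)^(k+l) / ((k:ℝ)^k * (l:ℝ)^l))^2 := by
        rw [Real.exp_add]
        have e1 : Real.exp (k:ℝ) ≠ 0 := Real.exp_ne_zero _
        have e2 : Real.exp (l:ℝ) ≠ 0 := Real.exp_ne_zero _
        have hpi : π ≠ 0 := Real.pi_ne_zero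
        field_simp


private lemma core (α P Q : ℝ) (b1 b2 b3 b4 : ℕ)
    (hα0 : 0 < α) (hα1 : α < 1)
    (h1 : (b1:ℝ) = α*P) (h2 : (b2:ℝ) = (1-α)*P)
    (h3 : (b3:ℝ) = α*Q) (h4 : (b4:ℝ) = (1-α)*Q)
    (hb1 : 1 ≤ b1) (hb2 : 1 ≤ b2) (hb3 : 1 ≤ b3) (hb4 : 1 ≤ b4) :
    π^4/1024 * ((P+Q)/(2*α*(1-α)*P*Q)) ≤
      ((((b1+b2).choose b1 : ℕ):ℝ) * (((b3+b4).choose b3 : ℕ):ℝ))^2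
        / ((((b1+b2+b3+b4).choose (b1+b3) : ℕ):ℝ))^2 := by
  have hα1' : 0 < 1 - α := by linarith
  have hP : (b1:ℝ) + (b2:ℝ) = P := by rw [h1, h2]; ring
  have hQ : (b3:ℝ) + (b4:ℝ) = Q := by rw [h3, h4]; ring
  have hP0 : 0 < P := by
    have : (0:ℝ) < (b1:ℝ) := by exact_mod_cast hb1
    nlinarith
  have hQ0 : 0 < Q := by
    have : (0:ℝ) < (b3:ℝ) := by exact_mod_cast hb3
    nlinarith
  have hC1 := choose_sq_lb b1 b2 hb1 hb2
  have hC2 := choose_sq_lb b3 b4 hb3 hb4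
  have hC3 := choose_sq_ub (b1+b3) (b2+b4) (by omega) (by omega)
  have hidx : b1 + b3 + (b2 + b4) = b1+b2+b3+b4 := by omega
  rw [hidx] at hC3
  have hden : (0:ℝ) < (((b1+b2+b3+b4).choose (b1+b3) : ℕ):ℝ) := by
    exact_mod_cast Nat.choose_pos (by omega)
  rw [le_div_iff₀ (by positivity)]
  have hL0 : (0:ℝ) ≤ π^4/1024 * ((P+Q)/(2*α*(1-α)*P*Q)) := by positivity
  calc π^4/1024 * ((P+Q)/(2*α*(1-α)*P*Q)) * (((b1+b2+b3+b4).choose (b1+b3) : ℕ):ℝ)^2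
      ≤ π^4/1024 * ((P+Q)/(2*α*(1-α)*P*Q)) *
        (4/π^2 * ((((b1+b3:ℕ):ℝ)+((b2+b4:ℕ):ℝ))/(2*((b1+b3:ℕ):ℝ)*((b2+b4:ℕ):ℝ))) *
          (((((b1+b3:ℕ):ℝ))+((b2+b4:ℕ):ℝ))^(b1+b2+b3+b4)
            / (((b1+b3:ℕ):ℝ)^(b1+b3) * ((b2+b4:ℕ):ℝ)^(b2+b4)))^2) := by
        exact mul_le_mul_of_nonneg_left hC3 hL0
    _ = (π/16 * (((b1:ℝ)+b2)/(2*b1*b2)) * (((b1:ℝ)+b2)^(b1+b2) / ((b1:ℝ)^b1 * (b2:ℝ)^b2))^2) *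
        (π/16 * (((b3:ℝ)+b4)/(2*b3*b4)) * (((b3:ℝ)+b4)^(b3+b4) / ((b3:ℝ)^b3 * (b4:ℝ)^b4))^2) := by
        have hpi : π ≠ 0 := Real.pi_ne_zero
        have hN0 : (0:ℝ) < P + Q := by linarith
        push_cast
        rw [show ((b1:ℝ)+b3+((b2:ℝ)+b4)) = P + Q by rw [← hP, ← hQ]; ring]
        rw [show ((b1:ℝ)+b3) = α*(P+Q) by rw [h1, h3]; ring]
        rw [show ((b2:ℝ)+b4) = (1-α)*(P+Q) by rw [h2, h4]; ring]
        rw [hP, hQ, h1, h2, h3, h4]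
        simp only [mul_pow]
        field_simp
        ring
    _ ≤ (((b1+b2).choose b1 : ℕ):ℝ)^2 * (((b3+b4).choose b3 : ℕ):ℝ)^2 := by
        exact mul_le_mul hC1 hC2 (by positivity) (by positivity)
    _ = ((((b1+b2).choose b1 : ℕ):ℝ) * (((b3+b4).choose b3 : ℕ):ℝ))^2 := by ring


set_option maxHeartbeats 1000000 in
/-- For every `c ∈ (0, 1/2]` there is `K > 0` such that for all integers
`n ≥ 2`, `0 < p < n`, and every real `α ∈ [c, 1−c]` for which `αn` and `αp` are integers,
`C(p, αp) · C(n − p, α(n−p)) / C(n, αn) ≥ K / √n`; equivalently, for `S'` uniform on the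
`αn`-element subsets of an `n`-element set and `Φ` a `p`-element subset,
`Pr[|S' ∩ Φ| = αp] ≥ K / √n`. -/
theorem stmt3 (c : ℝ) (hc0 : 0 < c) (hc : c ≤ 1 / 2) :
    ∃ K : ℝ, 0 < K ∧
      ∀ (n p m b : ℕ) (α : ℝ),
        2 ≤ n → 0 < p → p < n → c ≤ α → α ≤ 1 - c →
        (m : ℝ) = α * n → (b : ℝ) = α * p →
        K / Real.sqrt n
          ≤ ((Nat.choose p b * Nat.choose (n - p) (m - b) : ℕ) : ℝ)
              / ((Nat.choose n m : ℕ) : ℝ) := by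
  refine ⟨π^2 * Real.sqrt 2 / 16, by positivity, ?_⟩
  intro n p m b α hn hp0 hpn hcα hαc hm hb
  have hα0 : 0 < α := lt_of_lt_of_le hc0 hcα
  have hα1 : α < 1 := by linarith
  have hα1' : 0 < 1 - α := by linarith
  have hpR : (0:ℝ) < p := by exact_mod_cast hp0
  have hnR : (0:ℝ) < n := by positivity
  have hpnR : (p:ℝ) < n := by exact_mod_cast hpn
  have hb_lt_p : b < p := by
    have : (b:ℝ) < p := by rw [hb]; nlinarith
    exact_mod_cast this
  have hb_pos : 1 ≤ b := by
    have : (0:ℝ) < b := by rw [hb]; positivity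
    exact_mod_cast this
  have hb_lt_m : b < m := by
    have : (b:ℝ) < m := by rw [hb, hm]; nlinarith
    exact_mod_cast this
  have hm_lt_n : m < n := by
    have : (m:ℝ) < n := by rw [hm]; nlinarith
    exact_mod_cast this
  have hmb_lt : m - b < n - p := by
    have h2 : ((m - b : ℕ):ℝ) < ((n - p : ℕ):ℝ) := by
      rw [Nat.cast_sub hb_lt_m.le, Nat.cast_sub hpn.le, hm, hb]
      nlinarith
    exact_mod_cast h2
  have e2 : ((p - b : ℕ):ℝ) = (1-α)*(p:ℝ) := by
    rw [Nat.cast_sub hb_lt_p.le, hb]; ring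
  have e3 : ((m - b : ℕ):ℝ) = α*((n:ℝ)-(p:ℝ)) := by
    rw [Nat.cast_sub hb_lt_m.le, hm, hb]; ring
  have e4 : ((n - p - (m - b) : ℕ):ℝ) = (1-α)*((n:ℝ)-(p:ℝ)) := by
    rw [Nat.cast_sub hmb_lt.le, Nat.cast_sub hpn.le, e3]; ring
  have H := core α (p:ℝ) ((n:ℝ)-(p:ℝ)) b (p-b) (m-b) (n-p-(m-b)) hα0 hα1 hb e2 e3 e4
    hb_pos (by omega) (by omega) (by omega)
  rw [show b + (p - b) = p by omega, show (m-b) + (n-p-(m-b)) = n - p by omega] at H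
  rw [show p + (m-b) + (n-p-(m-b)) = n by omega, show b + (m - b) = m by omega] at H
  rw [show (p:ℝ) + ((n:ℝ)-(p:ℝ)) = (n:ℝ) by ring] at H
  -- lower bound the left side of H
  have hA : α*(1-α) ≤ 1/4 := by nlinarith [sq_nonneg (2*α-1)]
  have hB : (p:ℝ)*((n:ℝ)-p) ≤ (n:ℝ)^2/4 := by nlinarith [sq_nonneg (2*(p:ℝ)-n)]
  have hB0 : (0:ℝ) < (p:ℝ)*((n:ℝ)-p) := by nlinarith
  have hD : 2*α*(1-α)*(p:ℝ)*((n:ℝ)-p) ≤ (n:ℝ)^2/8 := by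
    have h11 : (α*(1-α)) * ((p:ℝ)*((n:ℝ)-p)) ≤ (1/4) * ((n:ℝ)^2/4) :=
      mul_le_mul hA hB hB0.le (by norm_num)
    nlinarith [h11]
  have hDpos : (0:ℝ) < 2*α*(1-α)*(p:ℝ)*((n:ℝ)-p) := by
    have h12 : (0:ℝ) < (n:ℝ) - p := by linarith
    have h13 : (0:ℝ) < 2*α := by linarith
    have h14 := mul_pos (mul_pos h13 hα1') (mul_pos hpR h12)
    nlinarith [h14]
  have hK2 : (π^2 * Real.sqrt 2 / 16)^2 / n ≤ π^4/1024 * ((n:ℝ)/(2*α*(1-α)*(p:ℝ)*((n:ℝ)-p))) := by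
    have hs2 : (Real.sqrt 2)^2 = 2 := Real.sq_sqrt (by norm_num)
    have h9 : (n:ℝ)/((n:ℝ)^2/8) ≤ (n:ℝ)/(2*α*(1-α)*(p:ℝ)*((n:ℝ)-p)) :=
      div_le_div_of_nonneg_left hnR.le hDpos hD
    have h10 : (n:ℝ)/((n:ℝ)^2/8) = 8/(n:ℝ) := by field_simp
    rw [h10] at h9
    calc (π^2 * Real.sqrt 2 / 16)^2 / n = π^4/1024 * (8/(n:ℝ)) := by
          rw [div_pow, mul_pow, hs2]; field_simp; ring
      _ ≤ π^4/1024 * ((n:ℝ)/(2*α*(1-α)*(p:ℝ)*((n:ℝ)-p))) := by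
          exact mul_le_mul_of_nonneg_left h9 (by positivity)
  have hfin : (π^2 * Real.sqrt 2 / 16)^2 / n ≤
      (((p.choose b * (n-p).choose (m-b) : ℕ):ℝ) / ((n.choose m : ℕ):ℝ))^2 := by
    refine hK2.trans (H.trans_eq ?_)
    push_cast
    rw [div_pow]
  have hR0 : (0:ℝ) ≤ ((p.choose b * (n-p).choose (m-b) : ℕ):ℝ) / ((n.choose m : ℕ):ℝ) := by
    positivity
  have hK0 : (0:ℝ) ≤ π^2 * Real.sqrt 2 / 16 := by positivity
  calc π^2 * Real.sqrt 2 / 16 / Real.sqrt n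
      = Real.sqrt ((π^2 * Real.sqrt 2 / 16)^2) / Real.sqrt n := by rw [Real.sqrt_sq hK0]
    _ = Real.sqrt ((π^2 * Real.sqrt 2 / 16)^2 / n) := (Real.sqrt_div (sq_nonneg _) _).symm
    _ ≤ Real.sqrt ((((p.choose b * (n-p).choose (m-b) : ℕ):ℝ) / ((n.choose m : ℕ):ℝ))^2) :=
        Real.sqrt_le_sqrt hfin
    _ = ((p.choose b * (n-p).choose (m-b) : ℕ):ℝ) / ((n.choose m : ℕ):ℝ) := Real.sqrt_sq hR0
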